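/- Let λ ∈ ℕ and define ψ_λ : DM(λ) → M(λ) by ψ_λ(v_i*) = 0 for i ≤ λ and ψ_λ(v_i*) = (-1)^i C(i, i-λ-1) v_i for i ≥ λ+1, where C(i,k) is the usual binomial coefficient. Then ψ_λ is a homomorphism of sl_2-modules. -/
import Mathlib


/-- f·v_i = (i+1) v_{i+1} on the Verma module M(λ) with basis v_i = single i 1. -/
noncomputable def Fop : (ℕ →₀ ℂ) →ₗ[ℂ] (ℕ →₀ ℂ) :=
  Finsupp.lsum ℂ fun i => ((i : ℂ) + 1) • Finsupp.lsingle (i + 1)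

/-- e·v_i = (λ+1-i) v_{i-1} (with v_{-1} = 0). -/
noncomputable def Eop (lam : ℂ) : (ℕ →₀ ℂ) →ₗ[ℂ] (ℕ →₀ ℂ) :=
  Finsupp.lsum ℂ fun i => if i = 0 then 0 else (lam + 1 - i) • Finsupp.lsingle (i - 1)

/-- h·v_i = (λ-2i) v_i. -/
noncomputable def Hop (lam : ℂ) : (ℕ →₀ ℂ) →ₗ[ℂ] (ℕ →₀ ℂ) :=
  Finsupp.lsum ℂ fun i => (lam - 2 * i) • Finsupp.lsingle i

/-- On the dual DM(λ): e·v_i* = i v_{i-1}*. -/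
noncomputable def Ed : (ℕ →₀ ℂ) →ₗ[ℂ] (ℕ →₀ ℂ) :=
  Finsupp.lsum ℂ fun i => (i : ℂ) • Finsupp.lsingle (i - 1)

/-- On the dual DM(λ): f·v_i* = (λ-i) v_{i+1}*. -/
noncomputable def Fd (lam : ℂ) : (ℕ →₀ ℂ) →ₗ[ℂ] (ℕ →₀ ℂ) :=
  Finsupp.lsum ℂ fun i => (lam - i) • Finsupp.lsingle (i + 1)

/-- Generalized binomial coefficient C(λ,i) = λ(λ-1)⋯(λ-i+1)/i!. -/
noncomputable def gbinom (lam : ℂ) (i : ℕ) : ℂ :=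
  (∏ j ∈ Finset.range i, (lam - j)) / (Nat.factorial i : ℂ)

/-- φ_λ(v_i) = C(λ,i) v_i*. -/
noncomputable def phiMap (lam : ℂ) : (ℕ →₀ ℂ) →ₗ[ℂ] (ℕ →₀ ℂ) :=
  Finsupp.lsum ℂ fun i => gbinom lam i • Finsupp.lsingle i

/-- ψ_λ(v_i*) = 0 for i ≤ λ, (-1)^i C(i,i-λ-1) v_i for i > λ. -/
noncomputable def psiMap (n : ℕ) : (ℕ →₀ ℂ) →ₗ[ℂ] (ℕ →₀ ℂ) :=
  Finsupp.lsum ℂ fun i =>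
    (if i ≤ n then (0 : ℂ) else (-1) ^ i * (Nat.choose i (i - n - 1) : ℂ)) • Finsupp.lsingle i

/- Auxiliary material -/

noncomputable def cpsi (n i : ℕ) : ℂ :=
  if i ≤ n then (0 : ℂ) else (-1) ^ i * (Nat.choose i (i - n - 1) : ℂ)

lemma psi_single (n i : ℕ) (x : ℂ) :
    psiMap n (Finsupp.single i x) = Finsupp.single i (cpsi n i * x) := by
  simp only [psiMap, cpsi, Finsupp.lsum_single]
  split_ifs with h <;> simp [Finsupp.smul_single]

lemma Ed_single (i : ℕ) (x : ℂ) :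
    Ed (Finsupp.single i x) = Finsupp.single (i - 1) ((i : ℂ) * x) := by
  simp [Ed, Finsupp.smul_single]

lemma Fd_single (lam : ℂ) (i : ℕ) (x : ℂ) :
    Fd lam (Finsupp.single i x) = Finsupp.single (i + 1) ((lam - i) * x) := by
  simp [Fd, Finsupp.smul_single]

lemma Fop_single (i : ℕ) (x : ℂ) :
    Fop (Finsupp.single i x) = Finsupp.single (i + 1) (((i : ℂ) + 1) * x) := by
  simp [Fop, Finsupp.smul_single]

lemma Hop_single (lam : ℂ) (i : ℕ) (x : ℂ) :
    Hop lam (Finsupp.single i x) = Finsupp.single i ((lam - 2 * i) * x) := by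
  simp [Hop, Finsupp.smul_single]

lemma Eop_single (lam : ℂ) (i : ℕ) (x : ℂ) :
    Eop lam (Finsupp.single i x) =
      if i = 0 then 0 else Finsupp.single (i - 1) ((lam + 1 - i) * x) := by
  simp only [Eop, Finsupp.lsum_single]
  split_ifs with h <;> simp [Finsupp.smul_single]

lemma nat_keyE (n m : ℕ) (h : n + 1 ≤ m) :
    (m + 1).choose (m - n) * (m - n) = (m + 1) * m.choose (m - n - 1) := by
  have h1 : m - n = (m - n - 1) + 1 := by omega
  rw [h1, ← Nat.add_one_mul_choose_eq]
  simp

lemma keyE (n m : ℕ) :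
    cpsi n m * ((m : ℂ) + 1) = ((n : ℂ) + 1 - ((m : ℂ) + 1)) * cpsi n (m + 1) := by
  unfold cpsi
  rcases lt_trichotomy m n with h | h | h
  · rw [if_pos h.le, if_pos (by omega)]; ring
  · subst h
    rw [if_pos le_rfl]
    push_cast
    ring
  · rw [if_neg (by omega), if_neg (by omega)]
    have hc := congrArg (Nat.cast : ℕ → ℂ) (nat_keyE n m h)
    have hsub : ((m - n : ℕ) : ℂ) = (m : ℂ) - n := by
      push_cast [Nat.cast_sub h.le]; ring
    push_cast [hsub] at hc
    have h1 : m + 1 - n - 1 = m - n := by omega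
    rw [h1]
    push_cast
    rw [pow_succ]
    linear_combination (-((-1 : ℂ) ^ m)) * hc

lemma keyF (n i : ℕ) :
    cpsi n (i + 1) * ((n : ℂ) - i) = ((i : ℂ) + 1) * cpsi n i := by
  unfold cpsi
  rcases lt_trichotomy i n with h | h | h
  · rw [if_pos (by omega), if_pos h.le]; ring
  · subst h
    rw [if_pos le_rfl]
    have : (i : ℂ) - i = 0 := by ring
    rw [this]
    ring
  · rw [if_neg (by omega), if_neg (by omega)]
    have hc := congrArg (Nat.cast : ℕ → ℂ) (nat_keyE n i h)
    have hsub : ((i - n : ℕ) : ℂ) = (i : ℂ) - n := by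
      push_cast [Nat.cast_sub h.le]; ring
    push_cast [hsub] at hc
    have h1 : i + 1 - n - 1 = i - n := by omega
    rw [h1]
    push_cast
    rw [pow_succ]
    linear_combination ((-1 : ℂ)) ^ i * hc

/-- For λ = n ∈ ℕ, the map ψ_n : DM(n) → M(n), v_i* ↦ 0 (i ≤ n),
v_i* ↦ (-1)^i C(i,i-n-1) v_i (i ≥ n+1), is a homomorphism of sl₂-modules. -/
theorem psi_is_sl2_hom (n : ℕ) :
    psiMap n ∘ₗ Ed = Eop (n : ℂ) ∘ₗ psiMap n ∧
    psiMap n ∘ₗ Fd (n : ℂ) = Fop ∘ₗ psiMap n ∧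
    psiMap n ∘ₗ Hop (n : ℂ) = Hop (n : ℂ) ∘ₗ psiMap n := by
  refine ⟨?_, ?_, ?_⟩ <;>
    refine Finsupp.lhom_ext' fun i => LinearMap.ext_ring ?_ <;>
    simp only [LinearMap.comp_apply, Finsupp.lsingle_apply, Ed_single, Fd_single, Hop_single,
      psi_single, Eop_single, Fop_single, mul_one]
  · -- E component
    rcases Nat.eq_zero_or_pos i with rfl | hi
    · simp [cpsi]
    · obtain ⟨m, rfl⟩ : ∃ m, i = m + 1 := ⟨i - 1, by omega⟩
      rw [if_neg (by omega)]
      simp only [Nat.add_sub_cancel]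
      congr 1
      push_cast
      exact keyE n m
  · -- F component
    congr 1
    exact keyF n i
  · -- H component
    congr 1
    ring
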